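/- arXiv:1702.01689 — 3 statements merged into one kernel-verified Lean document; each statement's English description precedes it below -/
import Mathlib

section
/- Let ν be a finite Borel measure on a metric space, t > 0, and suppose that for ν-almost every x, liminf_{r→0} log ν(B(x,r))/log r > t. Then there exists an increasing sequence of Borel sets (A_k) with ν(⋃_k A_k) = ν(X) such that the restricted measures ν|_{A_k} have finite t-energy: ∬ d(x,y)^{-t} dν|_{A_k}(x) dν|_{A_k}(y) < ∞. -/
open MeasureTheory Filter Topology Metric
open scoped ENNReal

section Aux

variable {X : Type*} [MetricSpace X] [MeasurableSpace X] [BorelSpace X]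

/-- The function `x ↦ ν (ball x r)` is lower semicontinuous, hence measurable. -/
lemma measurable_measure_ball (ν : Measure X) (r : ℝ) :
    Measurable fun x : X => ν (ball x r) := by
  apply LowerSemicontinuous.measurable
  intro x y hy
  rcases le_or_gt r 0 with hr | hr
  · exfalso
    simp only [ball_eq_empty.2 hr, measure_empty] at hy
    exact ENNReal.not_lt_zero hy
  · have hU : (⋃ n : ℕ, ball x (r - 1/(n+1))) = ball x r := by
      ext z
      simp only [Set.mem_iUnion, mem_ball]
      constructor
      · rintro ⟨n, hn⟩
        have : (0:ℝ) < 1/(n+1) := by positivity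
        linarith
      · intro hz
        obtain ⟨n, hn⟩ := exists_nat_one_div_lt (show (0:ℝ) < r - dist z x by linarith)
        exact ⟨n, by linarith⟩
    have hmono : Monotone fun n : ℕ => ball x (r - 1/(n+1)) := by
      intro a b hab
      apply ball_subset_ball
      have h1 : (0:ℝ) < a + 1 := by positivity
      have h2 : (a:ℝ) + 1 ≤ b + 1 := by exact_mod_cast by omega
      have := one_div_le_one_div_of_le h1 h2
      linarith
    have htendsto := tendsto_measure_iUnion_atTop (μ := ν) hmono
    rw [hU] at htendsto
    obtain ⟨n, hn⟩ := ((tendsto_order.1 htendsto).1 y hy).exists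
    have hδ : (0:ℝ) < 1/(n+1) := by positivity
    filter_upwards [Metric.ball_mem_nhds x hδ] with x' hx'
    refine lt_of_lt_of_le hn (measure_mono ?_)
    intro z hz
    rw [mem_ball] at hz hx' ⊢
    have : dist z x' ≤ dist z x + dist x x' := dist_triangle z x x'
    rw [dist_comm x' x] at hx'
    linarith
/-- If the measure of small balls around `x` is bounded by `C * r ^ t'` with `t' > t`, then the
`t`-potential of `ν` at `x` is bounded by a constant independent of `x`. -/
lemma potential_bound_aux (ν : Measure X) [IsFiniteMeasure ν] {t t' ε C : ℝ}
    (ht : 0 < t) (htt' : t < t') (hε : 0 < ε) (hC : 0 ≤ C) :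
    ∃ M : ℝ≥0∞, M < ⊤ ∧ ∀ x : X,
      (∀ r : ℝ, 0 < r → r < ε → ν (ball x r) ≤ ENNReal.ofReal (C * r ^ t')) →
      (∫⁻ y, edist x y ^ (-t) ∂ν) ≤ M := by
  have ht' : 0 < t' := ht.trans htt'
  set r0 : ℝ := ε / 4 with hr0def
  have hr0 : 0 < r0 := by positivity
  set K : ℝ := (r0 * (1/2)) ^ (-t) * (2 * r0) ^ t' with hK
  have hKnn : 0 ≤ K := by positivity
  set q : ℝ := (1/2 : ℝ) ^ (t' - t) with hq
  have hqnn : 0 ≤ q := Real.rpow_nonneg (by norm_num) _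
  have hq1 : q < 1 := Real.rpow_lt_one (by norm_num) (by norm_num) (by linarith)
  refine ⟨ENNReal.ofReal (r0 ^ (-t)) * ν Set.univ +
    ENNReal.ofReal (C * K) * (1 - ENNReal.ofReal q)⁻¹, ?_, ?_⟩
  · refine ENNReal.add_lt_top.2 ⟨ENNReal.mul_lt_top ENNReal.ofReal_lt_top (measure_lt_top ν _),
      ENNReal.mul_lt_top ENNReal.ofReal_lt_top ?_⟩
    rw [ENNReal.inv_lt_top, tsub_pos_iff_lt]
    exact ENNReal.ofReal_lt_one.2 hq1
  intro x hb
  -- the singleton `{x}` is null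
  have hkey : ∀ n : ℕ, ν {x} ≤ ENNReal.ofReal (C * (r0 * (1/2) ^ n) ^ t') := by
    intro n
    have h1 : 0 < r0 * (1/2 : ℝ) ^ n := by positivity
    have hle : (1/2 : ℝ) ^ n ≤ 1 := pow_le_one₀ (by norm_num) (by norm_num)
    have h2 : r0 * (1/2 : ℝ) ^ n < ε := by nlinarith
    refine (measure_mono ?_).trans (hb _ h1 h2)
    exact Set.singleton_subset_iff.2 (mem_ball_self h1)
  have htend : Tendsto (fun n : ℕ => ENNReal.ofReal (C * (r0 * (1/2 : ℝ) ^ n) ^ t'))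
      atTop (𝓝 0) := by
    have h1 : Tendsto (fun n : ℕ => r0 * (1/2 : ℝ) ^ n) atTop (𝓝 0) := by
      simpa using
        (tendsto_pow_atTop_nhds_zero_of_lt_one (by norm_num : (0:ℝ) ≤ 1/2)
          (by norm_num : (1/2:ℝ) < 1)).const_mul r0
    have h2 : ContinuousAt (fun r : ℝ => ENNReal.ofReal (C * r ^ t')) 0 :=
      ENNReal.continuous_ofReal.continuousAt.comp
        (continuousAt_const.mul (Real.continuousAt_rpow_const 0 t' (Or.inr ht'.le)))
    have := h2.tendsto.comp h1
    simpa [Function.comp_def, Real.zero_rpow ht'.ne'] using this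
  have hxnull : ν {x} = 0 := le_antisymm (ge_of_tendsto' htend hkey) (zero_le)
  -- annuli
  set D : ℕ → Set X := fun n =>
    closedBall x (r0 * (1/2) ^ n) \ closedBall x (r0 * (1/2) ^ (n+1)) with hD
  -- covering
  have hcover : (Set.univ : Set X) ⊆ {x} ∪ ((closedBall x r0)ᶜ ∪ ⋃ n, D n) := by
    intro y _
    rcases lt_or_ge r0 (dist y x) with hfar | hnear
    · exact Or.inr (Or.inl (by simpa [mem_closedBall] using not_le.2 hfar))
    rcases eq_or_lt_of_le (dist_nonneg : (0:ℝ) ≤ dist y x) with h0 | hpos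
    · refine Or.inl ?_
      exact Set.mem_singleton_iff.mpr (dist_eq_zero.mp h0.symm)
    have hdr : 0 < dist y x / r0 := div_pos hpos hr0
    have hP : ∃ n : ℕ, (1/2 : ℝ) ^ n < dist y x / r0 :=
      exists_pow_lt_of_lt_one hdr (by norm_num)
    have hm0 : Nat.find hP ≠ 0 := by
      intro h
      have hs := Nat.find_spec hP
      rw [h] at hs
      simp only [pow_zero] at hs
      have : dist y x / r0 ≤ 1 := (div_le_one hr0).2 hnear
      linarith
    obtain ⟨k, hk⟩ := Nat.exists_eq_succ_of_ne_zero hm0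
    have hspec : (1/2 : ℝ) ^ (k+1) < dist y x / r0 := by
      have := Nat.find_spec hP; rwa [hk] at this
    have hmin : ¬ (1/2 : ℝ) ^ k < dist y x / r0 :=
      Nat.find_min hP (by omega)
    refine Or.inr (Or.inr (Set.mem_iUnion.2 ⟨k, ?_, ?_⟩))
    · have h1 : dist y x / r0 ≤ (1/2 : ℝ) ^ k := not_lt.1 hmin
      have h2 : dist y x ≤ r0 * (1/2) ^ k := by
        rw [div_le_iff₀ hr0] at h1; linarith
      simpa [mem_closedBall] using h2
    · intro hmem
      rw [mem_closedBall] at hmem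
      have : dist y x / r0 ≤ (1/2 : ℝ) ^ (k+1) := by
        rw [div_le_iff₀ hr0]; linarith
      linarith
  -- pointwise bound on annuli / far region
  have hbound : ∀ (c : ℝ), 0 < c → ∀ y : X, c < dist y x →
      edist x y ^ (-t) ≤ ENNReal.ofReal (c ^ (-t)) := by
    intro c hc y hy
    have h1 : ENNReal.ofReal c ≤ edist x y := by
      rw [edist_dist, dist_comm]
      exact ENNReal.ofReal_le_ofReal hy.le
    rw [← ENNReal.ofReal_rpow_of_pos hc, ENNReal.rpow_neg, ENNReal.rpow_neg]
    exact ENNReal.inv_le_inv.2 (ENNReal.rpow_le_rpow h1 ht.le)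
  -- split the integral
  have hsplit : (∫⁻ y, edist x y ^ (-t) ∂ν) ≤
      (∫⁻ y in {x}, edist x y ^ (-t) ∂ν) +
        ((∫⁻ y in (closedBall x r0)ᶜ, edist x y ^ (-t) ∂ν) +
          ∑' n, ∫⁻ y in D n, edist x y ^ (-t) ∂ν) := by
    calc (∫⁻ y, edist x y ^ (-t) ∂ν)
        = ∫⁻ y in Set.univ, edist x y ^ (-t) ∂ν := (setLIntegral_univ _).symm
      _ ≤ ∫⁻ y in {x} ∪ ((closedBall x r0)ᶜ ∪ ⋃ n, D n), edist x y ^ (-t) ∂ν :=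
          lintegral_mono_set hcover
      _ ≤ (∫⁻ y in {x}, edist x y ^ (-t) ∂ν) +
            ∫⁻ y in (closedBall x r0)ᶜ ∪ ⋃ n, D n, edist x y ^ (-t) ∂ν :=
          lintegral_union_le _ _ _
      _ ≤ _ := by
          gcongr
          refine (lintegral_union_le _ _ _).trans ?_
          gcongr
          exact lintegral_iUnion_le _ _
  have h1 : (∫⁻ y in {x}, edist x y ^ (-t) ∂ν) = 0 :=
    setLIntegral_measure_zero _ _ hxnull
  have h2 : (∫⁻ y in (closedBall x r0)ᶜ, edist x y ^ (-t) ∂ν) ≤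
      ENNReal.ofReal (r0 ^ (-t)) * ν Set.univ := by
    refine le_trans (setLIntegral_mono' (measurableSet_closedBall.compl)
      (fun y hy => hbound r0 hr0 y (by simpa [mem_closedBall] using hy))) ?_
    rw [setLIntegral_const]
    exact mul_le_mul_right (measure_mono (Set.subset_univ _)) _
  have h3 : ∀ n : ℕ, (∫⁻ y in D n, edist x y ^ (-t) ∂ν) ≤
      ENNReal.ofReal ((r0 * (1/2) ^ (n+1)) ^ (-t)) *
        ENNReal.ofReal (C * (2 * (r0 * (1/2) ^ n)) ^ t') := by
    intro n
    have hrn : 0 < r0 * (1/2 : ℝ) ^ (n+1) := by positivity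
    have hDsub : D n ⊆ closedBall x (r0 * (1/2) ^ n) := Set.diff_subset
    have hmeasD : ν (D n) ≤ ENNReal.ofReal (C * (2 * (r0 * (1/2) ^ n)) ^ t') := by
      have h2rn : 0 < 2 * (r0 * (1/2 : ℝ) ^ n) := by positivity
      have hle : (1/2 : ℝ) ^ n ≤ 1 := pow_le_one₀ (by norm_num) (by norm_num)
      have h2rε : 2 * (r0 * (1/2 : ℝ) ^ n) < ε := by nlinarith
      refine le_trans (measure_mono (hDsub.trans (closedBall_subset_ball ?_))) (hb _ h2rn h2rε)
      nlinarith
    refine le_trans (setLIntegral_mono' (measurableSet_closedBall.diff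
      measurableSet_closedBall) (fun y hy => hbound _ hrn y ?_)) ?_
    · have := hy.2
      rw [mem_closedBall] at this
      exact not_le.1 this
    · rw [setLIntegral_const]
      exact mul_le_mul_right hmeasD _
  -- summing the geometric series
  have hterm : ∀ n : ℕ, (r0 * (1/2 : ℝ) ^ (n+1)) ^ (-t) * (C * (2 * (r0 * (1/2) ^ n)) ^ t')
      = (C * K) * q ^ n := by
    intro n
    have hhalf : (0:ℝ) < (1/2 : ℝ) ^ n := by positivity
    have e1 : (r0 * (1/2 : ℝ) ^ (n+1)) = (r0 * (1/2)) * (1/2) ^ n := by ring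
    have e2 : (2 * (r0 * (1/2 : ℝ) ^ n)) = (2 * r0) * (1/2) ^ n := by ring
    have key : ∀ a b c : ℝ, 0 < a → 0 < b → 0 < c →
        (a * c) ^ (-t) * (b * c) ^ t' = (a ^ (-t) * b ^ t') * c ^ (t' - t) := by
      intro a b c ha hb hc
      have h5 : c ^ (-t) * c ^ t' = c ^ (t' - t) := by
        rw [← Real.rpow_add hc]; congr 1; ring
      rw [Real.mul_rpow ha.le hc.le, Real.mul_rpow hb.le hc.le, ← h5]; ring
    have e4 : ((1/2 : ℝ) ^ n) ^ (t' - t) = q ^ n := by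
      rw [← Real.rpow_natCast (1/2 : ℝ) n, ← Real.rpow_mul (by norm_num),
        mul_comm, Real.rpow_mul (by norm_num), Real.rpow_natCast]
    calc (r0 * (1/2 : ℝ) ^ (n+1)) ^ (-t) * (C * (2 * (r0 * (1/2) ^ n)) ^ t')
        = C * ((r0 * (1/2 : ℝ) ^ (n+1)) ^ (-t) * (2 * (r0 * (1/2) ^ n)) ^ t') := by ring
      _ = C * (((r0 * (1/2)) ^ (-t) * (2 * r0) ^ t') * ((1/2 : ℝ) ^ n) ^ (t' - t)) := by
          rw [e1, e2, key _ _ _ (by positivity) (by positivity) hhalf]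
      _ = (C * K) * q ^ n := by rw [e4, hK]; ring
  have hsum : (∑' n, ∫⁻ y in D n, edist x y ^ (-t) ∂ν) ≤
      ENNReal.ofReal (C * K) * (1 - ENNReal.ofReal q)⁻¹ := by
    have hle : (∑' n, ∫⁻ y in D n, edist x y ^ (-t) ∂ν) ≤
        ∑' n : ℕ, ENNReal.ofReal (C * K) * (ENNReal.ofReal q) ^ n := by
      refine ENNReal.tsum_le_tsum (fun n => (h3 n).trans (le_of_eq ?_))
      rw [← ENNReal.ofReal_mul (by positivity), hterm n,
        ENNReal.ofReal_mul (by positivity), ENNReal.ofReal_pow hqnn]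
    rwa [ENNReal.tsum_mul_left, ENNReal.tsum_geometric] at hle
  refine hsplit.trans ?_
  rw [h1, zero_add]
  exact add_le_add h2 hsum

omit [BorelSpace X] in
/-- From the liminf lower bound on local dimension we extract a Frostman-type bound on
small balls. -/
lemma exists_ball_bound (ν : Measure X) [IsFiniteMeasure ν] {t : ℝ} (ht : 0 < t) (x : X)
    (hx : t < Filter.liminf
      (fun r : ℝ => Real.log (ν (ball x r)).toReal / Real.log r) (𝓝[>] (0:ℝ))) :
    ∃ t' > t, ∃ ε > 0, ∀ r : ℝ, 0 < r → r < ε →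
      ν (ball x r) ≤ ENNReal.ofReal (r ^ t') := by
  set f : ℝ → ℝ := fun r => Real.log (ν (ball x r)).toReal / Real.log r with hf
  rw [Filter.liminf_eq] at hx
  set S : Set ℝ := {a | ∀ᶠ r in 𝓝[>] (0:ℝ), a ≤ f r} with hS
  have hne : S.Nonempty := by
    by_contra h
    rw [Set.not_nonempty_iff_eq_empty] at h
    rw [h, Real.sSup_empty] at hx
    linarith
  obtain ⟨t', ht'S, htt'⟩ := exists_lt_of_lt_csSup hne hx
  have hev : {r : ℝ | t' ≤ f r} ∈ 𝓝[>] (0:ℝ) := ht'S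
  rw [mem_nhdsGT_iff_exists_Ioo_subset] at hev
  obtain ⟨u, hu, hsub⟩ := hev
  refine ⟨t', htt', min u 1, lt_min (Set.mem_Ioi.mp hu) one_pos, fun r hr hrε => ?_⟩
  have hru : r < u := lt_of_lt_of_le hrε (min_le_left _ _)
  have hr1 : r < 1 := lt_of_lt_of_le hrε (min_le_right _ _)
  have hfr : t' ≤ f r := hsub ⟨hr, hru⟩
  have hlogr : Real.log r < 0 := Real.log_neg hr hr1
  have hνne : ν (ball x r) ≠ ⊤ := measure_ne_top ν _
  set m : ℝ := (ν (ball x r)).toReal with hm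
  have hmnn : 0 ≤ m := ENNReal.toReal_nonneg
  have hlog : Real.log m ≤ t' * Real.log r := by
    have := (le_div_iff_of_neg hlogr).mp hfr
    linarith
  have hmle : m ≤ r ^ t' := by
    rcases eq_or_lt_of_le hmnn with h0 | hpos
    · rw [← h0]; positivity
    · have hrt : (0:ℝ) < r ^ t' := Real.rpow_pos_of_pos hr _
      rw [← Real.log_le_log_iff hpos hrt, Real.log_rpow hr]
      exact hlog
  calc ν (ball x r) = ENNReal.ofReal m := (ENNReal.ofReal_toReal hνne).symm
    _ ≤ ENNReal.ofReal (r ^ t') := ENNReal.ofReal_le_ofReal hmle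

end Aux

/-- If `ν` is a finite Borel measure whose lower local dimension is `> t` almost
everywhere, then there is an increasing sequence of Borel sets `A k` covering
almost all the space on which the restricted measures have finite `t`-energy. -/
theorem exists_increasing_sets_finite_energy
    {X : Type*} [MetricSpace X] [MeasurableSpace X] [BorelSpace X]
    (ν : Measure X) [IsFiniteMeasure ν] (t : ℝ) (ht : 0 < t)
    (hdim : ∀ᵐ x ∂ν, t <
      Filter.liminf (fun r : ℝ => Real.log (ν (ball x r)).toReal / Real.log r)
        (𝓝[>] (0:ℝ))) :
    ∃ A : ℕ → Set X, Monotone A ∧ (∀ k, MeasurableSet (A k)) ∧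
      ν (⋃ k, A k) = ν Set.univ ∧
      ∀ k, (∫⁻ x, ∫⁻ y, (edist x y) ^ (-t) ∂(ν.restrict (A k)) ∂(ν.restrict (A k))) < ⊤ := by
  set e : ℕ → ℝ := fun k => 1 / (k + 1) with he
  have hepos : ∀ k, 0 < e k := fun k => by positivity
  have hele : ∀ k, e k ≤ 1 := by
    intro k
    rw [he]
    have h1 : (1:ℝ) ≤ (k:ℝ) + 1 := by
      have := Nat.cast_nonneg (α := ℝ) k; linarith
    simpa using one_div_le_one_div_of_le one_pos h1
  have hemono : ∀ {j k : ℕ}, j ≤ k → e k ≤ e j := by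
    intro j k hjk
    apply one_div_le_one_div_of_le (by positivity)
    exact_mod_cast by omega
  set A : ℕ → Set X := fun k => {x | ∀ q : ℚ, 0 < (q:ℝ) → (q:ℝ) < e k →
    ν (ball x (q:ℝ)) ≤ ENNReal.ofReal ((q:ℝ) ^ (t + e k))} with hA
  have hAmeas : ∀ k, MeasurableSet (A k) := by
    intro k
    have : A k = ⋂ q : ℚ, {x | 0 < (q:ℝ) → (q:ℝ) < e k →
        ν (ball x (q:ℝ)) ≤ ENNReal.ofReal ((q:ℝ) ^ (t + e k))} := by
      ext x; simp [hA, Set.mem_iInter]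
    rw [this]
    refine MeasurableSet.iInter (fun q => ?_)
    by_cases h0 : 0 < (q:ℝ)
    · by_cases h1 : (q:ℝ) < e k
      · have heq : {x : X | 0 < (q:ℝ) → (q:ℝ) < e k →
            ν (ball x (q:ℝ)) ≤ ENNReal.ofReal ((q:ℝ) ^ (t + e k))} =
            (fun x : X => ν (ball x (q:ℝ))) ⁻¹'
              Set.Iic (ENNReal.ofReal ((q:ℝ) ^ (t + e k))) := by
          ext x; simp [h0, h1]
        rw [heq]
        exact measurable_measure_ball ν _ measurableSet_Iic
      · have heq : {x : X | 0 < (q:ℝ) → (q:ℝ) < e k →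
            ν (ball x (q:ℝ)) ≤ ENNReal.ofReal ((q:ℝ) ^ (t + e k))} = Set.univ := by
          ext x; simp [h1]
        rw [heq]; exact MeasurableSet.univ
    · have heq : {x : X | 0 < (q:ℝ) → (q:ℝ) < e k →
          ν (ball x (q:ℝ)) ≤ ENNReal.ofReal ((q:ℝ) ^ (t + e k))} = Set.univ := by
        ext x; simp [h0]
      rw [heq]; exact MeasurableSet.univ
  have hAmono : Monotone A := by
    intro j k hjk x hx q hq0 hqk
    have hqj : (q:ℝ) < e j := lt_of_lt_of_le hqk (hemono hjk)
    refine (hx q hq0 hqj).trans (ENNReal.ofReal_le_ofReal ?_)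
    refine Real.rpow_le_rpow_of_exponent_ge hq0 ?_ ?_
    · exact le_of_lt (lt_of_lt_of_le hqk (hele k))
    · have := hemono hjk; linarith
  refine ⟨A, hAmono, hAmeas, ?_, ?_⟩
  · -- covering
    have hae : ∀ᵐ x ∂ν, x ∈ ⋃ k, A k := by
      filter_upwards [hdim] with x hx
      obtain ⟨t', htt', ε, hε, hb⟩ := exists_ball_bound ν ht x hx
      have hpos : 0 < min (t' - t) (min ε 1) := by
        refine lt_min (by linarith) (lt_min hε one_pos)
      obtain ⟨k, hk⟩ := exists_nat_one_div_lt hpos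
      refine Set.mem_iUnion.2 ⟨k, fun q hq0 hqk => ?_⟩
      have hek1 : e k < min (t' - t) (min ε 1) := by
        rw [he]; push_cast; exact_mod_cast hk
      have hq1 : (q:ℝ) < 1 :=
        lt_of_lt_of_le hqk (le_trans hek1.le (le_trans (min_le_right _ _) (min_le_right _ _)))
      have hqε : (q:ℝ) < ε :=
        lt_of_lt_of_le hqk (le_trans hek1.le (le_trans (min_le_right _ _) (min_le_left _ _)))
      refine (hb _ hq0 hqε).trans (ENNReal.ofReal_le_ofReal ?_)
      refine Real.rpow_le_rpow_of_exponent_ge hq0 hq1.le ?_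
      have : e k ≤ t' - t := le_trans hek1.le (min_le_left _ _)
      linarith
    refine measure_congr ?_
    rw [Filter.eventuallyEq_univ]
    exact hae
  · -- finite energy
    intro k
    have htk : t < t + e k := by linarith [hepos k]
    have hC : (0:ℝ) ≤ 2 ^ (t + e k) := Real.rpow_nonneg (by norm_num) _
    obtain ⟨M, hMlt, hM⟩ := potential_bound_aux (X := X) ν ht htk
      (half_pos (hepos k)) hC
    -- extend the rational ball bound to real radii
    have hext : ∀ x ∈ A k, ∀ r : ℝ, 0 < r → r < e k / 2 →
        ν (ball x r) ≤ ENNReal.ofReal (2 ^ (t + e k) * r ^ (t + e k)) := by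
      intro x hx r hr hre
      have h2r : r < min (2*r) (e k) := by
        refine lt_min (by linarith) (by linarith)
      obtain ⟨q, hq1, hq2⟩ := exists_rat_btwn h2r
      have hq0 : 0 < (q:ℝ) := hr.trans hq1
      have hqe : (q:ℝ) < e k := hq2.trans_le (min_le_right _ _)
      have hq2r : (q:ℝ) ≤ 2 * r := (hq2.trans_le (min_le_left _ _)).le
      calc ν (ball x r) ≤ ν (ball x (q:ℝ)) := measure_mono (ball_subset_ball hq1.le)
        _ ≤ ENNReal.ofReal ((q:ℝ) ^ (t + e k)) := hx q hq0 hqe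
        _ ≤ ENNReal.ofReal (2 ^ (t + e k) * r ^ (t + e k)) := by
            refine ENNReal.ofReal_le_ofReal ?_
            calc ((q:ℝ)) ^ (t + e k) ≤ (2 * r) ^ (t + e k) :=
                Real.rpow_le_rpow hq0.le hq2r (by linarith [hepos k])
              _ = 2 ^ (t + e k) * r ^ (t + e k) :=
                Real.mul_rpow (by norm_num) hr.le
    calc (∫⁻ x, ∫⁻ y, (edist x y) ^ (-t) ∂(ν.restrict (A k)) ∂(ν.restrict (A k)))
        ≤ ∫⁻ x in A k, (∫⁻ y, (edist x y) ^ (-t) ∂ν) ∂ν :=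
          lintegral_mono (fun x => lintegral_mono' Measure.restrict_le_self le_rfl)
      _ ≤ ∫⁻ _ in A k, M ∂ν :=
          setLIntegral_mono' (hAmeas k) (fun x hx => hM x (hext x hx))
      _ = M * ν (A k) := setLIntegral_const _ _
      _ < ⊤ := ENNReal.mul_lt_top hMlt (measure_lt_top ν _)
end

section
/- Let T preserve an ergodic probability measure μ, and let d : X → [0,∞) be measurable with |d∘T − d| ≤ 1 pointwise. Then ∫ (d∘T − d) dμ = 0, and consequently d(Tⁿx)/n → 0 for μ-a.e. x. -/
open MeasureTheory Filter Topology Function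

section Aux

variable {X : Type*} [MeasurableSpace X] {μ : Measure X} [IsProbabilityMeasure μ]
  {T : X → X} {f : X → ℝ}

private lemma integrable_of_abs_le (hf : Measurable f) {C : ℝ} (hC : ∀ x, |f x| ≤ C) :
    Integrable f μ :=
  (integrable_const C).mono' hf.aestronglyMeasurable
    (Filter.Eventually.of_forall fun x => by simpa [Real.norm_eq_abs] using hC x)

private lemma measurable_birkhoffSum (hT : Measurable T) (hf : Measurable f) (n : ℕ) :
    Measurable fun x => birkhoffSum T f n x := by
  unfold birkhoffSum
  exact Finset.measurable_sum _ fun k _ => hf.comp (hT.iterate k)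

private lemma abs_birkhoffSum_le {C : ℝ} (hC : ∀ x, |f x| ≤ C) (n : ℕ) (x : X) :
    |birkhoffSum T f n x| ≤ n * C := by
  calc |birkhoffSum T f n x| ≤ ∑ k ∈ Finset.range n, |f (T^[k] x)| :=
        Finset.abs_sum_le_sum_abs _ _
    _ ≤ ∑ _k ∈ Finset.range n, C := Finset.sum_le_sum fun k _ => hC _
    _ = n * C := by simp [mul_comm]

/-- `maxSum T f n x = max_{1 ≤ k ≤ n+1} birkhoffSum T f k x`. -/
private noncomputable def maxSum (T : X → X) (f : X → ℝ) : ℕ → X → ℝ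
  | 0 => f
  | (n + 1) => fun x => max (maxSum T f n x) (birkhoffSum T f (n + 2) x)

private lemma measurable_maxSum (hT : Measurable T) (hf : Measurable f) (n : ℕ) :
    Measurable (maxSum T f n) := by
  induction n with
  | zero => exact hf
  | succ n ih => exact ih.max (measurable_birkhoffSum hT hf (n + 2))

private lemma maxSum_mono (T : X → X) (f : X → ℝ) (n : ℕ) (x : X) :
    maxSum T f n x ≤ maxSum T f (n + 1) x := le_max_left _ _

private lemma maxSum_mono' (T : X → X) (f : X → ℝ) {m n : ℕ} (h : m ≤ n) (x : X) :
    maxSum T f m x ≤ maxSum T f n x := by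
  induction n with
  | zero => simp_all
  | succ n ih =>
    rcases Nat.lt_or_ge m (n + 1) with h' | h'
    · exact (ih (Nat.lt_succ_iff.mp h')).trans (maxSum_mono T f n x)
    · have : m = n + 1 := le_antisymm h h'
      subst this; rfl

private lemma birkhoffSum_le_maxSum (T : X → X) (f : X → ℝ) {k n : ℕ} (h : k ≤ n) (x : X) :
    birkhoffSum T f (k + 1) x ≤ maxSum T f n x := by
  induction n with
  | zero =>
    interval_cases k
    simp [maxSum, birkhoffSum_one]
  | succ n ih =>
    rcases Nat.lt_or_ge k (n + 1) with h' | h'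
    · exact (ih (Nat.lt_succ_iff.mp h')).trans (maxSum_mono T f n x)
    · have : k = n + 1 := le_antisymm h h'
      subst this
      exact le_max_right _ _

private lemma abs_maxSum_le {C : ℝ} (hC : ∀ x, |f x| ≤ C) (n : ℕ) (x : X) :
    |maxSum T f n x| ≤ (n + 2) * C := by
  induction n with
  | zero =>
    have := hC x
    have h0 : 0 ≤ C := (abs_nonneg _).trans this
    show |f x| ≤ ((0 : ℕ) + 2) * C
    push_cast
    nlinarith
  | succ n ih =>
    have h1 := abs_birkhoffSum_le (T := T) hC (n + 3) x
    have h0 : 0 ≤ C := (abs_nonneg (f x)).trans (hC x)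
    have : |max (maxSum T f n x) (birkhoffSum T f (n + 2) x)| ≤
        max |maxSum T f n x| |birkhoffSum T f (n + 2) x| := abs_max_le_max_abs_abs
    have h2 := abs_birkhoffSum_le (T := T) hC (n + 2) x
    calc |maxSum T f (n + 1) x| ≤ max |maxSum T f n x| |birkhoffSum T f (n + 2) x| := this
      _ ≤ ((n : ℝ) + 1 + 2) * C := by
          apply max_le
          · nlinarith
          · push_cast at h2 ⊢; nlinarith
      _ = ((n + 1 : ℕ) + 2) * C := by push_cast; ring

/-- Key pointwise inequality for the maximal ergodic theorem:
`maxSum n x ≤ f x + (maxSum n (T x))⁺`. -/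
private lemma maxSum_le (T : X → X) (f : X → ℝ) (n : ℕ) (x : X) :
    maxSum T f n x ≤ f x + max (maxSum T f n (T x)) 0 := by
  induction n with
  | zero =>
    have h := le_max_right (f (T x)) (0 : ℝ)
    show f x ≤ f x + max (f (T x)) 0
    linarith
  | succ n ih =>
    apply max_le
    · refine ih.trans ?_
      have := maxSum_mono T f n (T x)
      have : max (maxSum T f n (T x)) 0 ≤ max (maxSum T f (n + 1) (T x)) 0 :=
        max_le_max this le_rfl
      linarith
    · rw [birkhoffSum_succ' T f (n + 1) x]
      have h1 : birkhoffSum T f (n + 1) (T x) ≤ maxSum T f (n + 1) (T x) :=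
        birkhoffSum_le_maxSum T f (Nat.le_succ n) (T x)
      have h2 : maxSum T f (n + 1) (T x) ≤ max (maxSum T f (n + 1) (T x)) 0 := le_max_left _ _
      linarith

/-- The maximal ergodic theorem (Garsia's proof): the integral of `f` over the set where some
Birkhoff sum is positive is nonnegative. -/
private lemma maximal_ergodic (hT : MeasurePreserving T μ μ) (hf : Measurable f) {C : ℝ}
    (hC : ∀ x, |f x| ≤ C) (n : ℕ) :
    0 ≤ ∫ x in {x | 0 < maxSum T f n x}, f x ∂μ := by
  set M := maxSum T f n with hM
  set P : X → ℝ := fun x => max (M x) 0 with hP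
  set E := {x | 0 < M x} with hE
  have hMmeas : Measurable M := measurable_maxSum hT.measurable hf n
  have hPmeas : Measurable P := hMmeas.max measurable_const
  have hEmeas : MeasurableSet E := measurableSet_lt measurable_const hMmeas
  have hPC : ∀ x, |P x| ≤ (n + 2) * C := by
    intro x
    have h1 := abs_maxSum_le (T := T) hC n x
    have : |P x| ≤ max |M x| |(0 : ℝ)| := abs_max_le_max_abs_abs
    have h0 : 0 ≤ C := (abs_nonneg (f x)).trans (hC x)
    simp only [abs_zero] at this
    calc |P x| ≤ max |M x| 0 := this
      _ ≤ (n + 2) * C := max_le h1 (by positivity)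
  have hPint : Integrable P μ := integrable_of_abs_le hPmeas hPC
  have hPTint : Integrable (fun x => P (T x)) μ :=
    integrable_of_abs_le (hPmeas.comp hT.measurable) fun x => hPC (T x)
  have hfint : Integrable f μ := integrable_of_abs_le hf hC
  -- ∫ P ∘ T = ∫ P
  have hPT : ∫ x, P (T x) ∂μ = ∫ x, P x ∂μ := by
    rw [← integral_map hT.measurable.aemeasurable hPmeas.aestronglyMeasurable, hT.map_eq]
  -- pointwise on E : P x - P (T x) ≤ f x
  have hpt : ∀ x ∈ E, P x - P (T x) ≤ f x := by
    intro x hx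
    have h1 : M x ≤ f x + max (M (T x)) 0 := maxSum_le T f n x
    have h2 : P x = M x := max_eq_left (le_of_lt hx)
    rw [h2]; simp only [hP]; linarith
  have key : ∫ x in E, (P x - P (T x)) ∂μ ≤ ∫ x in E, f x ∂μ :=
    setIntegral_mono_on (hPint.sub hPTint).integrableOn hfint.integrableOn hEmeas hpt
  have h3 : ∫ x in E, (P x - P (T x)) ∂μ = (∫ x in E, P x ∂μ) - ∫ x in E, P (T x) ∂μ :=
    integral_sub hPint.integrableOn hPTint.integrableOn
  -- ∫_E P = ∫ P since P = 0 off E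
  have h4 : ∫ x in E, P x ∂μ = ∫ x, P x ∂μ := by
    rw [← integral_add_compl hEmeas hPint]
    have : ∫ x in Eᶜ, P x ∂μ = 0 := by
      apply setIntegral_eq_zero_of_forall_eq_zero
      intro x hx
      simp only [hE, Set.mem_compl_iff, Set.mem_setOf_eq, not_lt] at hx
      exact max_eq_right hx
    rw [this, add_zero]
  have h5 : ∫ x in E, P (T x) ∂μ ≤ ∫ x, P (T x) ∂μ :=
    setIntegral_le_integral hPTint (Filter.Eventually.of_forall fun x => le_max_right _ _)
  linarith

/-- If `∫ f < 0` and `T` is ergodic, then a.e. the Birkhoff sums of `f` are bounded above. -/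
private lemma ae_bddAbove_birkhoffSum (hT : Ergodic T μ) (hf : Measurable f) {C : ℝ}
    (hC : ∀ x, |f x| ≤ C) (hneg : ∫ x, f x ∂μ < 0) :
    ∀ᵐ x ∂μ, ∃ K : ℝ, ∀ n, birkhoffSum T f n x ≤ K := by
  have hTm : Measurable T := hT.toMeasurePreserving.measurable
  set D := {x | ∀ K : ℕ, ∃ n, (K : ℝ) < birkhoffSum T f n x} with hD
  have hDmeas : MeasurableSet D := by
    have : D = ⋂ K : ℕ, ⋃ n : ℕ, {x | (K : ℝ) < birkhoffSum T f n x} := by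
      ext x; simp [hD]
    rw [this]
    exact MeasurableSet.iInter fun K => MeasurableSet.iUnion fun n =>
      measurableSet_lt measurable_const (measurable_birkhoffSum hTm hf n)
  have hDinv : T ⁻¹' D = D := by
    ext x
    simp only [hD, Set.mem_preimage, Set.mem_setOf_eq]
    constructor
    · intro h K
      obtain ⟨n, hn⟩ := h (K + ⌈C⌉₊)
      refine ⟨n + 1, ?_⟩
      rw [birkhoffSum_succ' T f n x]
      have h1 : -C ≤ f x := neg_le_of_abs_le (hC x)
      have h2 : (C : ℝ) ≤ ⌈C⌉₊ := Nat.le_ceil C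
      push_cast
      push_cast at hn
      linarith
    · intro h K
      obtain ⟨n, hn⟩ := h (K + ⌈C⌉₊)
      have hn1 : 1 ≤ n := by
        rcases Nat.eq_zero_or_pos n with h0 | h0
        · subst h0
          simp only [birkhoffSum_zero] at hn
          exfalso
          have : (0 : ℝ) ≤ (K : ℝ) + (⌈C⌉₊ : ℝ) := by positivity
          push_cast at hn; linarith
        · exact h0
      obtain ⟨m, rfl⟩ := Nat.exists_eq_add_of_le hn1
      refine ⟨m, ?_⟩
      rw [Nat.add_comm 1 m, birkhoffSum_succ' T f m x] at hn
      have h1 : f x ≤ C := le_of_abs_le (hC x)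
      have h2 : (C : ℝ) ≤ ⌈C⌉₊ := Nat.le_ceil C
      push_cast at hn
      linarith
  rcases hT.toPreErgodic.ae_empty_or_univ hDmeas hDinv with h | h
  · -- μ D = 0 : a.e. the sums are bounded
    have h0 : μ D = 0 := ae_eq_empty.mp h
    filter_upwards [measure_eq_zero_iff_ae_notMem.mp h0] with x hx
    simp only [hD, Set.mem_setOf_eq, not_forall, not_exists, not_lt] at hx
    obtain ⟨K, hK⟩ := hx
    exact ⟨K, hK⟩
  · -- μ Dᶜ = 0 : contradiction with ∫ f < 0 via maximal ergodic theorem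
    exfalso
    have hcompl : μ Dᶜ = 0 := by
      rw [← ae_eq_univ] at *
      exact h
    set E : ℕ → Set X := fun n => {x | 0 < maxSum T f n x} with hEdef
    have hEmeas : ∀ n, MeasurableSet (E n) :=
      fun n => measurableSet_lt measurable_const (measurable_maxSum hTm hf n)
    have hEmono : Monotone E := by
      intro m n hmn x hx
      exact lt_of_lt_of_le hx (maxSum_mono' T f hmn x)
    have hfint : Integrable f μ := integrable_of_abs_le hf hC
    have hDE : D ⊆ ⋃ n, E n := by
      intro x hx
      obtain ⟨n, hn⟩ := hx 0
      have hn1 : 1 ≤ n := by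
        rcases Nat.eq_zero_or_pos n with h0 | h0
        · subst h0; simp at hn
        · exact h0
      obtain ⟨m, rfl⟩ := Nat.exists_eq_add_of_le hn1
      refine Set.mem_iUnion.mpr ⟨m, ?_⟩
      simp only [hEdef, Set.mem_setOf_eq]
      calc (0 : ℝ) ≤ (0 : ℕ) := by norm_num
        _ < birkhoffSum T f (1 + m) x := hn
        _ = birkhoffSum T f (m + 1) x := by rw [Nat.add_comm]
        _ ≤ maxSum T f m x := birkhoffSum_le_maxSum T f le_rfl x
    have hUcompl : μ (⋃ n, E n)ᶜ = 0 :=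
      measure_mono_null (Set.compl_subset_compl.mpr hDE) hcompl
    have hUa : (⋃ n, E n) =ᵐ[μ] Set.univ := ae_eq_univ.mpr hUcompl
    have htend : Tendsto (fun n => ∫ x in E n, f x ∂μ) atTop (𝓝 (∫ x in ⋃ n, E n, f x ∂μ)) :=
      tendsto_setIntegral_of_monotone hEmeas hEmono hfint.integrableOn
    have hlim : ∫ x in ⋃ n, E n, f x ∂μ = ∫ x, f x ∂μ := by
      rw [setIntegral_congr_set hUa, setIntegral_univ]
    have h0le : 0 ≤ ∫ x, f x ∂μ := by
      rw [← hlim]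
      exact ge_of_tendsto' htend fun n =>
        maximal_ergodic hT.toMeasurePreserving hf hC n
    linarith

private lemma birkhoffSum_telescope (T : X → X) (d : X → ℝ) (n : ℕ) (x : X) :
    birkhoffSum T (fun y => d (T y) - d y) n x = d (T^[n] x) - d x := by
  induction n with
  | zero => simp
  | succ n ih =>
    rw [birkhoffSum_succ, ih, Function.iterate_succ_apply']
    ring

private lemma birkhoffSum_sub_const (T : X → X) (g : X → ℝ) (a : ℝ) (n : ℕ) (x : X) :
    birkhoffSum T (fun y => g y - a) n x = birkhoffSum T g n x - n * a := by
  unfold birkhoffSum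
  rw [Finset.sum_sub_distrib, Finset.sum_const, Finset.card_range, nsmul_eq_mul]

end Aux

/-- If `T` preserves an ergodic probability measure `μ` and `d ≥ 0` is measurable
with `|d∘T − d| ≤ 1` pointwise, then `∫ (d∘T − d) dμ = 0` and `d(Tⁿx)/n → 0`
for `μ`-a.e. `x`. -/
theorem integral_coboundary_zero_and_sublinear_growth
    {X : Type*} [MeasurableSpace X] (μ : Measure X) [IsProbabilityMeasure μ]
    (T : X → X) (hT : Ergodic T μ)
    (d : X → ℝ) (hd : Measurable d) (hd0 : ∀ x, 0 ≤ d x)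
    (hlip : ∀ x, |d (T x) - d x| ≤ 1) :
    (∫ x, (d (T x) - d x) ∂μ = 0) ∧
    (∀ᵐ x ∂μ, Tendsto (fun n => d (T^[n] x) / (n : ℝ)) atTop (𝓝 0)) := by
  have hTm : Measurable T := hT.toMeasurePreserving.measurable
  set g : X → ℝ := fun x => d (T x) - d x with hgdef
  have hgmeas : Measurable g := (hd.comp hTm).sub hd
  have hgint : Integrable g μ := integrable_of_abs_le hgmeas hlip
  set c : ℝ := ∫ x, g x ∂μ with hcdef
  -- Part A: a.e. upper bounds on `d(Tⁿ x)` from the maximal ergodic theorem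
  have hP1 : ∀ᵐ x ∂μ, ∀ k : ℕ, ∃ K : ℝ, ∀ n : ℕ,
      d (T^[n] x) - d x - n * (c + 1 / (k + 1)) ≤ K := by
    rw [ae_all_iff]
    intro k
    set a : ℝ := c + 1 / (k + 1) with hadef
    set f : X → ℝ := fun y => g y - a with hfdef
    have hfmeas : Measurable f := hgmeas.sub measurable_const
    have hfC : ∀ x, |f x| ≤ 1 + |a| := by
      intro x
      calc |f x| ≤ |g x| + |a| := abs_sub _ _
        _ ≤ 1 + |a| := by linarith [hlip x]
    have hk1 : (0 : ℝ) < 1 / (k + 1) := by positivity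
    have hint : ∫ x, f x ∂μ < 0 := by
      have : ∫ x, f x ∂μ = c - a := by
        rw [hfdef]
        rw [integral_sub hgint (integrable_const a), integral_const]
        simp
        exact hcdef.symm
      rw [this, hadef]; linarith
    filter_upwards [ae_bddAbove_birkhoffSum hT hfmeas hfC hint] with x hx
    obtain ⟨K, hK⟩ := hx
    refine ⟨K, fun n => ?_⟩
    have := hK n
    rw [hfdef, birkhoffSum_sub_const, hgdef, birkhoffSum_telescope] at this
    linarith
  have hP2 : ∀ᵐ x ∂μ, ∀ k : ℕ, ∃ K : ℝ, ∀ n : ℕ,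
      d x - d (T^[n] x) - n * (-c + 1 / (k + 1)) ≤ K := by
    rw [ae_all_iff]
    intro k
    set a : ℝ := -c + 1 / (k + 1) with hadef
    set f : X → ℝ := fun y => (d y - d (T y)) - a with hfdef
    have hfmeas : Measurable f := (hd.sub (hd.comp hTm)).sub measurable_const
    have hfC : ∀ x, |f x| ≤ 1 + |a| := by
      intro x
      have h1 : |d x - d (T x)| ≤ 1 := by rw [abs_sub_comm]; exact hlip x
      calc |f x| ≤ |d x - d (T x)| + |a| := abs_sub _ _
        _ ≤ 1 + |a| := by linarith
    have hk1 : (0 : ℝ) < 1 / (k + 1) := by positivity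
    have hnegg : Integrable (fun y => d y - d (T y)) μ := by
      have : (fun y => d y - d (T y)) = fun y => -g y := by
        funext y; simp [hgdef]
      rw [this]
      exact hgint.neg
    have hint : ∫ x, f x ∂μ < 0 := by
      have h2 : ∫ x, (d x - d (T x)) ∂μ = -c := by
        have : (fun y => d y - d (T y)) = fun y => -g y := by
          funext y; simp [hgdef]
        rw [this, integral_neg, hcdef]
      have : ∫ x, f x ∂μ = -c - a := by
        rw [hfdef, integral_sub hnegg (integrable_const a), integral_const, h2]
        simp
      rw [this, hadef]; linarith
    filter_upwards [ae_bddAbove_birkhoffSum hT hfmeas hfC hint] with x hx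
    obtain ⟨K, hK⟩ := hx
    refine ⟨K, fun n => ?_⟩
    have := hK n
    have htel : birkhoffSum T (fun y => d y - d (T y)) n x = d x - d (T^[n] x) := by
      have heq : (fun y => d y - d (T y)) = fun y => (-d) (T y) - (-d) y := by
        funext y; simp; ring
      rw [heq, birkhoffSum_telescope]
      simp only [Pi.neg_apply]
      ring
    rw [hfdef, birkhoffSum_sub_const, htel] at this
    linarith
  -- Part B: recurrence
  have hP3 : ∀ᵐ x ∂μ, ∀ m : ℕ, d x ≤ m → ∃ᶠ n in atTop, d (T^[n] x) ≤ m := by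
    rw [ae_all_iff]
    intro m
    have hs : MeasurableSet {y | d y ≤ (m : ℝ)} := measurableSet_le hd measurable_const
    have := hT.toMeasurePreserving.conservative.ae_mem_imp_frequently_image_mem
      hs.nullMeasurableSet
    filter_upwards [this] with x hx hdx
    exact hx hdx
  -- Combine
  have hPall := hP1.and (hP2.and hP3)
  haveI : (ae μ).NeBot := ae_neBot.mpr (IsProbabilityMeasure.ne_zero μ)
  obtain ⟨x₀, hx₀1, hx₀2, hx₀3⟩ := hPall.exists
  -- c ≥ 0
  have hc_nonneg : 0 ≤ c := by
    by_contra hc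
    push_neg at hc
    obtain ⟨k, hk⟩ := exists_nat_one_div_lt (show (0 : ℝ) < -c by linarith)
    set a : ℝ := c + 1 / (k + 1) with hadef
    have ha : a < 0 := by rw [hadef]; push_cast at hk ⊢; linarith
    obtain ⟨K, hK⟩ := hx₀1 k
    obtain ⟨n, hn⟩ := exists_nat_gt ((d x₀ + K) / (-a))
    have h1 : d x₀ + K < n * (-a) := by
      rw [div_lt_iff₀ (by linarith)] at hn
      linarith
    have h2 := hK n
    have h3 := hd0 (T^[n] x₀)
    rw [← hadef] at h2
    nlinarith
  -- c ≤ 0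
  have hc_nonpos : c ≤ 0 := by
    by_contra hc
    push_neg at hc
    obtain ⟨k, hk⟩ := exists_nat_one_div_lt hc
    set b : ℝ := c - 1 / (k + 1) with hbdef
    have hb : 0 < b := by rw [hbdef]; push_cast at hk ⊢; linarith
    obtain ⟨K, hK⟩ := hx₀2 k
    set m : ℕ := ⌈d x₀⌉₊ with hmdef
    have hdm : d x₀ ≤ m := Nat.le_ceil _
    have hfreq := hx₀3 m hdm
    obtain ⟨n0, hn0⟩ := exists_nat_gt (((m : ℝ) - d x₀ + K) / b)
    obtain ⟨n, hn1, hn2⟩ := (frequently_atTop.mp hfreq) n0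
    have hnn0 : (n0 : ℝ) ≤ n := by exact_mod_cast hn1
    have h1 : (m : ℝ) - d x₀ + K < n0 * b := by
      rw [div_lt_iff₀ hb] at hn0
      linarith
    have h2 := hK n
    -- d x₀ - d (T^[n] x₀) - n * (-c + 1/(k+1)) ≤ K
    have h3 : (n : ℝ) * b ≤ d (T^[n] x₀) - d x₀ + K := by
      have heq : (n : ℝ) * b = -((n : ℝ) * (-c + 1 / (k + 1))) := by
        rw [hbdef]; ring
      rw [heq]
      linarith
    have h4 : (n0 : ℝ) * b ≤ (n : ℝ) * b := by
      apply mul_le_mul_of_nonneg_right hnn0 (le_of_lt hb)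
    linarith
  have hc0 : c = 0 := le_antisymm hc_nonpos hc_nonneg
  constructor
  · exact hc0
  · -- Part 2 : a.e. convergence
    filter_upwards [hP1] with x hx
    rw [Metric.tendsto_atTop]
    intro ε hε
    obtain ⟨k, hk⟩ := exists_nat_one_div_lt (show (0 : ℝ) < ε / 2 by linarith)
    obtain ⟨K, hK⟩ := hx k
    have hKn : ∀ n : ℕ, d (T^[n] x) ≤ d x + K + n * (1 / (k + 1)) := by
      intro n
      have := hK n
      rw [hc0] at this
      linarith
    have hdK : 0 ≤ d x + K := by
      have := hKn 0
      simp at this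
      linarith [hd0 x]
    obtain ⟨N, hN⟩ := exists_nat_gt ((d x + K) / (ε / 2))
    refine ⟨max N 1, fun n hn => ?_⟩
    have hn1 : 1 ≤ n := le_trans (le_max_right N 1) hn
    have hnN : N ≤ n := le_trans (le_max_left N 1) hn
    have hnpos : (0 : ℝ) < n := by exact_mod_cast hn1
    have hnn : (N : ℝ) ≤ n := by exact_mod_cast hnN
    have h1 : d x + K < (n : ℝ) * (ε / 2) := by
      rw [div_lt_iff₀ (by linarith)] at hN
      nlinarith
    have h2 : d (T^[n] x) ≤ d x + K + n * (1 / (k + 1)) := hKn n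
    have e1 : (n : ℝ) * (1 / (k + 1)) ≤ n * (ε / 2) :=
      mul_le_mul_of_nonneg_left (le_of_lt hk) (le_of_lt hnpos)
    have h6 : d (T^[n] x) < n * ε := by nlinarith
    have h5 : 0 ≤ d (T^[n] x) / n := div_nonneg (hd0 _) (le_of_lt hnpos)
    rw [Real.dist_eq, sub_zero, abs_of_nonneg h5]
    rw [div_lt_iff₀ hnpos]
    linarith
end

section
/- Let ν₁ be a compactly supported finite Borel measure on ℝ² with finite 1-energy I₁(ν₁) = ∬ |x−y|⁻¹ dν₁(x)dν₁(y) < ∞. For θ ∈ [0, π), let π_θ denote the orthogonal projection of ℝ² onto the line ℝ·e^{i(θ+π/2)}. Then for Lebesgue-almost every θ, the projected measure (π_θ)_* ν₁ is absolutely continuous with respect to one-dimensional Lebesgue measure on the line, and the map (θ, ξ) ↦ d(π_θ)_*ν₁/dℓ_θ(ξ) belongs to L²([0,π) × ℝ) with squared L²-norm bounded by C·I₁(ν₁) for a universal constant C. -/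
open MeasureTheory Real Metric Set Filter Topology
open scoped ENNReal NNReal


noncomputable def mproj (θ : ℝ) (z : ℂ) : ℝ :=
  (z * (starRingEnd ℂ) (Complex.exp (((θ + π/2 : ℝ) : ℂ) * Complex.I))).re

lemma continuous_mproj : Continuous fun q : ℝ × ℂ => mproj q.1 q.2 := by
  unfold mproj; fun_prop

lemma mproj_sub (θ : ℝ) (x y : ℂ) : mproj θ x - mproj θ y = mproj θ (x - y) := by
  simp [mproj, sub_mul]

lemma mproj_eq (θ : ℝ) (w : ℂ) :
    mproj θ w = ‖w‖ * Real.sin (Complex.arg w - θ) := by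
  conv_lhs => rw [mproj, ← Complex.norm_mul_exp_arg_mul_I w]
  rw [← Complex.exp_conj]
  simp only [map_mul, Complex.conj_ofReal, Complex.conj_I, mul_neg]
  rw [mul_assoc, ← Complex.exp_add]
  have : (Complex.arg w : ℂ) * Complex.I + -(((θ + π/2 : ℝ) : ℂ) * Complex.I)
      = ((Complex.arg w - (θ + π/2) : ℝ) : ℂ) * Complex.I := by
    push_cast; ring
  rw [this, Complex.re_ofReal_mul, Complex.exp_ofReal_mul_I_re]
  rw [show Complex.arg w - (θ + π/2) = (Complex.arg w - θ) - π/2 by ring,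
    Real.cos_sub_pi_div_two]

noncomputable def dseq (n : ℕ) : ℝ := ((n:ℝ)+1)⁻¹

lemma dseq_pos (n : ℕ) : 0 < dseq n := by unfold dseq; positivity

lemma dseq_tendsto : Tendsto dseq atTop (𝓝[>] 0) := by
  apply tendsto_nhdsWithin_of_tendsto_nhds_of_eventually_within
  · exact tendsto_one_div_add_atTop_nhds_zero_nat.congr (by intro n; simp [dseq, one_div])
  · exact Eventually.of_forall fun n => dseq_pos n

noncomputable def Lfun (μ : Measure ℝ) (ξ : ℝ) : ℝ≥0∞ :=
  liminf (fun n => μ (closedBall ξ (dseq n)) / ENNReal.ofReal (2 * dseq n)) atTop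

lemma measurable_measure_closedBall (μ : Measure ℝ) [SFinite μ] (r : ℝ) :
    Measurable fun ξ => μ (closedBall ξ r) := by
  have h : ∀ ξ, μ (closedBall ξ r) = ∫⁻ y, (if dist y ξ ≤ r then (1:ℝ≥0∞) else 0) ∂μ := by
    intro ξ
    rw [← lintegral_indicator_one measurableSet_closedBall]
    apply lintegral_congr
    intro y
    by_cases hy : dist y ξ ≤ r <;>
      simp [Set.indicator_apply, Metric.mem_closedBall, hy]
  simp_rw [h]
  apply Measurable.lintegral_prod_right (f := fun ξ y => if dist y ξ ≤ r then (1:ℝ≥0∞) else 0)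
  apply Measurable.ite ?_ measurable_const measurable_const
  exact (isClosed_le (by fun_prop) continuous_const).measurableSet

lemma measurable_Lfun (μ : Measure ℝ) [SFinite μ] : Measurable (Lfun μ) := by
  apply Measurable.liminf
  intro n
  exact (measurable_measure_closedBall μ (dseq n)).div measurable_const

lemma absCont (μ : Measure ℝ) [IsFiniteMeasure μ] (h : ∀ᵐ ξ ∂μ, Lfun μ ξ < ⊤) :
    μ ≪ volume := by
  refine Measure.AbsolutelyContinuous.mk fun N hN hN0 => ?_
  have hB : μ {ξ | ¬ (Lfun μ ξ < ⊤)} = 0 := ae_iff.1 h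
  have key : ∀ M : ℕ, μ (N ∩ {ξ | Lfun μ ξ < (M:ℝ≥0∞)}) = 0 := by
    intro M
    have hle : μ (N ∩ {ξ | Lfun μ ξ < (M:ℝ≥0∞)})
        ≤ ((M:ℝ≥0) • volume) (N ∩ {ξ | Lfun μ ξ < (M:ℝ≥0∞)}) := by
      apply VitaliFamily.measure_le_of_frequently_le (v := Besicovitch.vitaliFamily μ)
        _ Measure.AbsolutelyContinuous.rfl
      rintro ξ ⟨-, hξ⟩
      have hfreq : ∃ᶠ n in atTop,
          μ (closedBall ξ (dseq n)) / ENNReal.ofReal (2 * dseq n) < (M:ℝ≥0∞) :=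
        frequently_lt_of_liminf_lt (by isBoundedDefault) hξ
      have hfreq' : ∃ᶠ n in atTop,
          μ (closedBall ξ (dseq n)) ≤ ((M:ℝ≥0) • volume) (closedBall ξ (dseq n)) := by
        apply hfreq.mono
        intro n hn
        have h2 : ENNReal.ofReal (2 * dseq n) ≠ 0 :=
          ne_of_gt (ENNReal.ofReal_pos.mpr (by linarith [dseq_pos n]))
        have h3 := (ENNReal.div_lt_iff (Or.inl h2) (Or.inl ENNReal.ofReal_ne_top)).mp hn
        have h4 : ((M:ℝ≥0) • volume) (closedBall ξ (dseq n))
            = (M:ℝ≥0∞) * ENNReal.ofReal (2 * dseq n) := by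
          rw [Measure.smul_apply, Real.volume_closedBall, ENNReal.smul_def, smul_eq_mul]
          norm_num
        rw [h4]
        exact h3.le
      exact ((Besicovitch.tendsto_filterAt μ ξ).comp dseq_tendsto).frequently hfreq'
    apply le_antisymm _ zero_le
    calc μ (N ∩ {ξ | Lfun μ ξ < (M:ℝ≥0∞)})
        ≤ ((M:ℝ≥0) • volume) (N ∩ {ξ | Lfun μ ξ < (M:ℝ≥0∞)}) := hle
      _ ≤ ((M:ℝ≥0) • volume) N := by
          apply measure_mono inter_subset_left
      _ = (M:ℝ≥0∞) * volume N := by rw [Measure.smul_apply, ENNReal.smul_def, smul_eq_mul]; norm_num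
      _ = 0 := by rw [hN0, mul_zero]
  have hsub : N ⊆ {ξ | ¬ (Lfun μ ξ < ⊤)} ∪ ⋃ M : ℕ, (N ∩ {ξ | Lfun μ ξ < (M:ℝ≥0∞)}) := by
    intro ξ hξ
    by_cases htop : Lfun μ ξ < ⊤
    · obtain ⟨M, hM⟩ := ENNReal.exists_nat_gt htop.ne
      exact Or.inr (mem_iUnion.mpr ⟨M, hξ, hM⟩)
    · exact Or.inl htop
  refine le_antisymm ?_ zero_le
  calc μ N ≤ μ ({ξ | ¬ (Lfun μ ξ < ⊤)} ∪ ⋃ M : ℕ, (N ∩ {ξ | Lfun μ ξ < (M:ℝ≥0∞)})) :=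
        measure_mono hsub
    _ ≤ μ {ξ | ¬ (Lfun μ ξ < ⊤)} + μ (⋃ M : ℕ, (N ∩ {ξ | Lfun μ ξ < (M:ℝ≥0∞)})) :=
        measure_union_le _ _
    _ ≤ 0 + ∑' M : ℕ, μ (N ∩ {ξ | Lfun μ ξ < (M:ℝ≥0∞)}) := by
        exact add_le_add hB.le (measure_iUnion_le _)
    _ = 0 := by simp [key]

lemma Lfun_eq_rnDeriv (μ : Measure ℝ) [IsFiniteMeasure μ] (hac : μ ≪ volume) :
    ∀ᵐ ξ ∂μ, Lfun μ ξ = μ.rnDeriv volume ξ := by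
  have h := Besicovitch.ae_tendsto_rnDeriv μ (volume : Measure ℝ)
  filter_upwards [hac.ae_le h] with ξ hξ
  have h2 : Tendsto (fun n => μ (closedBall ξ (dseq n)) / volume (closedBall ξ (dseq n)))
      atTop (𝓝 (μ.rnDeriv volume ξ)) := hξ.comp dseq_tendsto
  have h3 : (fun n => μ (closedBall ξ (dseq n)) / volume (closedBall ξ (dseq n)))
      = fun n => μ (closedBall ξ (dseq n)) / ENNReal.ofReal (2 * dseq n) := by
    ext n; rw [Real.volume_closedBall]
  rw [h3] at h2
  exact h2.liminf_eq

lemma geom (x y : ℂ) {δ : ℝ} (hδ : 0 < δ) :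
    volume ({θ : ℝ | dist (mproj θ y) (mproj θ x) ≤ δ} ∩ Set.Ico 0 π)
      ≤ ENNReal.ofReal (2*δ) * (ENNReal.ofReal (2*π) * edist x y ^ (-(1:ℝ))) := by
  set w := y - x with hw
  have hdist : ∀ θ, dist (mproj θ y) (mproj θ x) = |mproj θ w| := by
    intro θ; rw [Real.dist_eq, mproj_sub]
  have hedist : edist x y = ENNReal.ofReal (‖w‖) := by
    rw [edist_dist, Complex.dist_eq, hw, norm_sub_rev]
  rcases eq_or_ne w 0 with h0 | h0
  · have htop : edist x y ^ (-(1:ℝ)) = ⊤ := by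
      rw [hedist, h0, norm_zero, ENNReal.ofReal_zero]
      exact ENNReal.zero_rpow_of_neg (by norm_num)
    rw [htop, ENNReal.mul_top (ne_of_gt (ENNReal.ofReal_pos.mpr (by positivity))),
      ENNReal.mul_top (ne_of_gt (ENNReal.ofReal_pos.mpr (by positivity)))]
    exact le_top
  · have hr : 0 < ‖w‖ := norm_pos_iff.mpr h0
    set r := ‖w‖ with hrdef
    have hRHS : ENNReal.ofReal (2*δ) * (ENNReal.ofReal (2*π) * edist x y ^ (-(1:ℝ)))
        = ENNReal.ofReal (2*δ*(2*π*r⁻¹)) := by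
      rw [hedist, ENNReal.rpow_neg_one, ← ENNReal.ofReal_inv_of_pos hr,
        ← ENNReal.ofReal_mul (by positivity), ← ENNReal.ofReal_mul (by positivity)]
    rw [hRHS]
    rcases le_or_gt r (2*δ) with hcase | hcase
    · calc volume ({θ : ℝ | dist (mproj θ y) (mproj θ x) ≤ δ} ∩ Set.Ico 0 π)
          ≤ volume (Set.Ico (0:ℝ) π) := measure_mono inter_subset_right
        _ = ENNReal.ofReal π := by rw [Real.volume_Ico, sub_zero]
        _ ≤ ENNReal.ofReal (2*δ*(2*π*r⁻¹)) := by
            apply ENNReal.ofReal_le_ofReal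
            have h1 : (1:ℝ) ≤ 2*δ/r := (one_le_div₀ hr).mpr hcase
            have h2 : 2*δ*(2*π*r⁻¹) = (2*δ/r)*(2*π) := by field_simp
            rw [h2]
            nlinarith [pi_pos, h1]
    · set s : ℝ := δ / r with hs
      have hs01 : 0 < s := by positivity
      have hsub : {θ : ℝ | dist (mproj θ y) (mproj θ x) ≤ δ} ∩ Set.Ico 0 π
          ⊆ ⋃ k ∈ Finset.Icc (-1:ℤ) 2, closedBall (Complex.arg w + k*π) (π/2 * s) := by
        rintro θ ⟨hθ1, hθ2⟩
        rw [Set.mem_setOf_eq, hdist θ, mproj_eq] at hθ1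
        have habs : |Real.sin (θ - Complex.arg w)| = |Real.sin (Complex.arg w - θ)| := by
          rw [← neg_sub (Complex.arg w) θ, Real.sin_neg, abs_neg]
        have hθ1' : r * |Real.sin (θ - Complex.arg w)| ≤ δ := by
          rw [habs]
          calc r * |Real.sin (Complex.arg w - θ)|
              = |r * Real.sin (Complex.arg w - θ)| := by
                rw [abs_mul, abs_of_pos hr]
            _ ≤ δ := hθ1
        set t := θ - Complex.arg w with ht
        have harg1 : Complex.arg w ≤ π := Complex.arg_le_pi w
        have harg2 : -π < Complex.arg w := Complex.neg_pi_lt_arg w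
        obtain ⟨hθ0, hθpi⟩ := hθ2
        have ht1 : -π ≤ t := by rw [ht]; linarith
        have ht2 : t < 2*π := by rw [ht]; linarith
        set k : ℤ := round (t/π) with hk
        have hround : |t/π - (k:ℝ)| ≤ 1/2 := abs_sub_round _
        obtain ⟨hround1, hround2⟩ := abs_le.mp hround
        have hkmem : k ∈ Finset.Icc (-1:ℤ) 2 := by
          rw [Finset.mem_Icc]
          constructor
          · have h1 : (-1:ℝ) ≤ t/π := by rw [le_div_iff₀ pi_pos]; linarith
            have h2 : (-2:ℝ) < (k:ℝ) := by linarith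
            have h3 : (-2:ℤ) < k := by exact_mod_cast h2
            omega
          · have h1 : t/π < 2 := by rw [div_lt_iff₀ pi_pos]; linarith
            have h2 : (k:ℝ) < 3 := by linarith
            have h3 : k < (3:ℤ) := by exact_mod_cast h2
            omega
        set u := t - k*π with hu
        have hu2 : |u| ≤ π/2 := by
          have he0 : u = π * (t/π - (k:ℝ)) := by rw [hu]; field_simp
          have he : |u| = π * |t/π - (k:ℝ)| := by
            rw [he0, abs_mul, abs_of_pos pi_pos]
          rw [he]
          have := mul_le_mul_of_nonneg_left hround pi_pos.le
          linarith
        obtain ⟨huu1, huu2⟩ := abs_le.mp hu2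
        have hsin : |Real.sin u| = |Real.sin t| := by
          have hh : Real.sin (u + k*π) = (-1)^k * Real.sin u := Real.sin_add_int_mul_pi u k
          have habs1 : |((-1:ℝ))^k| = 1 := by
            rcases Int.even_or_odd k with h | h
            · rw [h.neg_one_zpow, abs_one]
            · rw [h.neg_one_zpow, abs_neg, abs_one]
          rw [show t = u + k*π by rw [hu]; ring, hh, abs_mul, habs1, one_mul]
        have hjordan : 2/π * |u| ≤ |Real.sin u| := by
          have h1 : 2/π * |u| ≤ Real.sin |u| := Real.mul_le_sin (abs_nonneg u) hu2
          rcases le_or_gt 0 u with h | h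
          · rw [abs_of_nonneg h] at h1 ⊢
            rwa [abs_of_nonneg (Real.sin_nonneg_of_nonneg_of_le_pi h
              (by linarith [pi_pos]))]
          · rw [abs_of_neg h] at h1 ⊢
            rw [Real.sin_neg] at h1
            have hsneg : Real.sin u ≤ 0 := by
              have h4 := Real.sin_nonneg_of_nonneg_of_le_pi (by linarith : (0:ℝ) ≤ -u)
                (by linarith [pi_pos])
              rw [Real.sin_neg] at h4; linarith
            rw [abs_of_nonpos hsneg]
            linarith
        have hsint : |Real.sin t| ≤ s := by
          rw [hs, le_div_iff₀ hr]
          linarith [hθ1']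
        have hfin : |u| ≤ π/2 * s := by
          have h2 : 2/π * |u| ≤ s := le_trans hjordan (hsin ▸ hsint)
          have h3 : |u| = π/2 * (2/π * |u|) := by field_simp
          rw [h3]
          nlinarith [pi_pos]
        refine Set.mem_iUnion₂.mpr ⟨k, hkmem, ?_⟩
        rw [mem_closedBall, Real.dist_eq]
        calc |θ - (Complex.arg w + k*π)| = |u| := by
              congr 1; rw [hu, ht]; ring
          _ ≤ π/2 * s := hfin
      calc volume ({θ : ℝ | dist (mproj θ y) (mproj θ x) ≤ δ} ∩ Set.Ico 0 π)
          ≤ volume (⋃ k ∈ Finset.Icc (-1:ℤ) 2, closedBall (Complex.arg w + k*π) (π/2 * s)) :=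
            measure_mono hsub
        _ ≤ ∑ k ∈ Finset.Icc (-1:ℤ) 2, volume (closedBall (Complex.arg w + k*π) (π/2 * s)) :=
            measure_biUnion_finset_le _ _
        _ = ∑ _k ∈ Finset.Icc (-1:ℤ) 2, ENNReal.ofReal (2 * (π/2 * s)) := by
            simp [Real.volume_closedBall]
        _ = 4 * ENNReal.ofReal (2 * (π/2 * s)) := by
            have hcard : (Finset.Icc (-1:ℤ) 2).card = 4 := rfl
            rw [Finset.sum_const, hcard, nsmul_eq_mul]
            norm_num
        _ = ENNReal.ofReal (2*δ*(2*π*r⁻¹)) := by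
            rw [show (4:ℝ≥0∞) = ENNReal.ofReal 4 by norm_num,
              ← ENNReal.ofReal_mul (by norm_num)]
            congr 1
            rw [hs]
            field_simp
            ring

lemma hmem_ind {α} [MeasurableSpace α] (μ : Measure α) {s : Set α} (hs : MeasurableSet s) :
    μ s = ∫⁻ y, Set.indicator s 1 y ∂μ := (lintegral_indicator_one hs).symm

noncomputable def qfun (δ θ : ℝ) (z : ℂ × ℂ) : ℝ≥0∞ :=
  if dist (mproj θ z.2) (mproj θ z.1) ≤ δ then 1 else 0

lemma continuous_mproj_comp {γ : Type*} [TopologicalSpace γ] {f : γ → ℝ} {g : γ → ℂ}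
    (hf : Continuous f) (hg : Continuous g) : Continuous fun c => mproj (f c) (g c) :=
  continuous_mproj.comp (hf.prodMk hg)

lemma measurable_mproj (θ : ℝ) : Measurable (mproj θ) :=
  (continuous_mproj_comp continuous_const continuous_id).measurable

lemma qfun_meas (δ : ℝ) : Measurable fun w : ℝ × (ℂ × ℂ) => qfun δ w.1 w.2 := by
  unfold qfun
  apply Measurable.ite ?_ measurable_const measurable_const
  have hc : Continuous fun w : ℝ × (ℂ × ℂ) => dist (mproj w.1 w.2.2) (mproj w.1 w.2.1) :=
    Continuous.dist (continuous_mproj_comp continuous_fst continuous_snd.snd)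
      (continuous_mproj_comp continuous_fst continuous_snd.fst)
  exact (isClosed_le hc continuous_const).measurableSet

noncomputable def Ffun (ν : Measure ℂ) (δ θ : ℝ) : ℝ≥0∞ := ∫⁻ z, qfun δ θ z ∂(ν.prod ν)

lemma Ffun_meas (ν : Measure ℂ) [SFinite ν] (δ : ℝ) : Measurable (Ffun ν δ) :=
  Measurable.lintegral_prod_right (f := fun θ z => qfun δ θ z) (qfun_meas δ)

lemma hinner (δ : ℝ) (z : ℂ × ℂ) : (∫⁻ θ in Set.Ico 0 π, qfun δ θ z ∂volume)
    = volume ({θ : ℝ | dist (mproj θ z.2) (mproj θ z.1) ≤ δ} ∩ Set.Ico 0 π) := by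
  have hc : Continuous fun θ : ℝ => dist (mproj θ z.2) (mproj θ z.1) :=
    Continuous.dist (continuous_mproj_comp continuous_id continuous_const)
      (continuous_mproj_comp continuous_id continuous_const)
  have hset : MeasurableSet {θ : ℝ | dist (mproj θ z.2) (mproj θ z.1) ≤ δ} :=
    (isClosed_le hc continuous_const).measurableSet
  rw [← Measure.restrict_apply hset, hmem_ind (volume.restrict (Set.Ico 0 π)) hset]
  apply lintegral_congr
  intro θ
  by_cases hy : dist (mproj θ z.2) (mproj θ z.1) ≤ δ <;>
    simp [qfun, Set.indicator_apply, Set.mem_setOf_eq, hy]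

lemma hdouble (ν : Measure ℂ) [IsFiniteMeasure ν] {δ : ℝ} (hδ : 0 < δ) :
    (∫⁻ θ in Set.Ico 0 π, Ffun ν δ θ ∂volume)
      ≤ ENNReal.ofReal (2*δ) * (ENNReal.ofReal (2*π)
          * ∫⁻ z : ℂ × ℂ, edist z.1 z.2 ^ (-(1:ℝ)) ∂(ν.prod ν)) := by
  have hedm : Measurable fun z : ℂ × ℂ => edist z.1 z.2 ^ (-(1:ℝ)) := by
    simp_rw [ENNReal.rpow_neg_one]
    exact measurable_edist.inv
  have hswap : (∫⁻ θ in Set.Ico 0 π, Ffun ν δ θ ∂volume)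
      = ∫⁻ z, (∫⁻ θ in Set.Ico 0 π, qfun δ θ z ∂volume) ∂(ν.prod ν) :=
    lintegral_lintegral_swap (qfun_meas δ).aemeasurable
  rw [hswap]
  calc ∫⁻ z, (∫⁻ θ in Set.Ico 0 π, qfun δ θ z ∂volume) ∂(ν.prod ν)
      ≤ ∫⁻ z : ℂ × ℂ, ENNReal.ofReal (2*δ) * (ENNReal.ofReal (2*π)
          * edist z.1 z.2 ^ (-(1:ℝ))) ∂(ν.prod ν) := by
        apply lintegral_mono
        intro z
        dsimp only
        rw [hinner δ z]
        exact geom z.1 z.2 hδ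
    _ = _ := by
        rw [lintegral_const_mul _ (hedm.const_mul _), lintegral_const_mul _ hedm]

noncomputable def Phifun (ν : Measure ℂ) (θ : ℝ) (x : ℂ) : ℝ≥0∞ :=
  liminf (fun n =>
    ν {y | dist (mproj θ y) (mproj θ x) ≤ dseq n} / ENNReal.ofReal (2 * dseq n)) atTop

lemma nuball_meas (ν : Measure ℂ) [SFinite ν] (δ : ℝ) :
    Measurable fun p : ℝ × ℂ => ν {y | dist (mproj p.1 y) (mproj p.1 p.2) ≤ δ} := by
  have hrepr : (fun p : ℝ × ℂ => ν {y | dist (mproj p.1 y) (mproj p.1 p.2) ≤ δ})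
      = fun p : ℝ × ℂ => ∫⁻ y,
        Set.indicator {y | dist (mproj p.1 y) (mproj p.1 p.2) ≤ δ} 1 y ∂ν := by
    funext p
    have hc : Continuous fun y : ℂ => dist (mproj p.1 y) (mproj p.1 p.2) :=
      Continuous.dist (continuous_mproj_comp continuous_const continuous_id) continuous_const
    exact hmem_ind ν (isClosed_le hc continuous_const).measurableSet
  rw [hrepr]
  apply Measurable.lintegral_prod_right
    (f := fun (p : ℝ × ℂ) (y : ℂ) =>
      Set.indicator {y | dist (mproj p.1 y) (mproj p.1 p.2) ≤ δ} 1 y)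
  have heq : (Function.uncurry fun (p : ℝ × ℂ) (y : ℂ) =>
      Set.indicator {y | dist (mproj p.1 y) (mproj p.1 p.2) ≤ δ} 1 y)
      = fun w : (ℝ × ℂ) × ℂ =>
        if dist (mproj w.1.1 w.2) (mproj w.1.1 w.1.2) ≤ δ then (1:ℝ≥0∞) else 0 := by
    funext w
    by_cases hy : dist (mproj w.1.1 w.2) (mproj w.1.1 w.1.2) ≤ δ <;>
      simp [Function.uncurry, Set.indicator_apply, Set.mem_setOf_eq, hy]
  rw [heq]
  apply Measurable.ite ?_ measurable_const measurable_const
  have hc : Continuous fun w : (ℝ × ℂ) × ℂ => dist (mproj w.1.1 w.2) (mproj w.1.1 w.1.2) :=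
    Continuous.dist (continuous_mproj_comp continuous_fst.fst continuous_snd)
      (continuous_mproj_comp continuous_fst.fst continuous_fst.snd)
  exact (isClosed_le hc continuous_const).measurableSet

lemma Phifun_meas (ν : Measure ℂ) [SFinite ν] :
    Measurable fun p : ℝ × ℂ => Phifun ν p.1 p.2 := by
  unfold Phifun
  apply Measurable.liminf
  intro n
  exact (nuball_meas ν (dseq n)).div measurable_const

noncomputable def Hfun (ν : Measure ℂ) (θ : ℝ) : ℝ≥0∞ := ∫⁻ x, Phifun ν θ x ∂ν

lemma Hfun_meas (ν : Measure ℂ) [SFinite ν] : Measurable (Hfun ν) :=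
  Measurable.lintegral_prod_right (f := fun θ x => Phifun ν θ x) (Phifun_meas ν)

lemma Ffun_iter (ν : Measure ℂ) [SFinite ν] (δ θ : ℝ) :
    Ffun ν δ θ = ∫⁻ x, ν {y | dist (mproj θ y) (mproj θ x) ≤ δ} ∂ν := by
  unfold Ffun
  have hm : Measurable fun z : ℂ × ℂ => qfun δ θ z := by
    have h : Measurable (Function.uncurry fun (θ : ℝ) (z : ℂ × ℂ) => qfun δ θ z) := qfun_meas δ
    exact h.of_uncurry_left
  rw [lintegral_prod _ hm.aemeasurable]
  apply lintegral_congr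
  intro x
  have hc : Continuous fun y : ℂ => dist (mproj θ y) (mproj θ x) :=
    Continuous.dist (continuous_mproj_comp continuous_const continuous_id) continuous_const
  have hset : MeasurableSet {y : ℂ | dist (mproj θ y) (mproj θ x) ≤ δ} :=
    (isClosed_le hc continuous_const).measurableSet
  rw [hmem_ind ν hset]
  apply lintegral_congr
  intro y
  by_cases hy : dist (mproj θ y) (mproj θ x) ≤ δ <;>
    simp [qfun, Set.indicator_apply, Set.mem_setOf_eq, hy]

lemma Phifun_eq_Lfun (ν : Measure ℂ) [IsFiniteMeasure ν] (θ : ℝ) (x : ℂ) :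
    Phifun ν θ x = Lfun (Measure.map (mproj θ) ν) (mproj θ x) := by
  unfold Phifun Lfun
  congr 1
  funext n
  congr 1
  rw [Measure.map_apply (measurable_mproj θ) measurableSet_closedBall]
  rfl

lemma Hfun_eq (ν : Measure ℂ) [IsFiniteMeasure ν] (θ : ℝ) :
    (∫⁻ ξ, Lfun (Measure.map (mproj θ) ν) ξ ∂(Measure.map (mproj θ) ν)) = Hfun ν θ := by
  rw [lintegral_map (measurable_Lfun _) (measurable_mproj θ)]
  exact lintegral_congr fun x => (Phifun_eq_Lfun ν θ x).symm

lemma nuball_slice_meas (ν : Measure ℂ) [SFinite ν] (θ δ : ℝ) :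
    Measurable fun x : ℂ => ν {y | dist (mproj θ y) (mproj θ x) ≤ δ} := by
  have h : Measurable (Function.uncurry fun (θ : ℝ) (x : ℂ) =>
      ν {y | dist (mproj θ y) (mproj θ x) ≤ δ}) := nuball_meas ν δ
  exact h.of_uncurry_left

lemma hFatou1 (ν : Measure ℂ) [SFinite ν] (θ : ℝ) :
    Hfun ν θ ≤ liminf (fun n => Ffun ν (dseq n) θ / ENNReal.ofReal (2 * dseq n)) atTop := by
  have h1 : Hfun ν θ ≤ liminf (fun n => ∫⁻ x,
      ν {y | dist (mproj θ y) (mproj θ x) ≤ dseq n} / ENNReal.ofReal (2 * dseq n) ∂ν) atTop :=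
    lintegral_liminf_le fun n => (nuball_slice_meas ν θ (dseq n)).div measurable_const
  apply h1.trans
  apply le_of_eq
  congr 1
  funext n
  simp_rw [div_eq_mul_inv]
  rw [lintegral_mul_const _ (nuball_slice_meas ν θ (dseq n)), ← Ffun_iter]

lemma hmain (ν : Measure ℂ) [IsFiniteMeasure ν] :
    (∫⁻ θ in Set.Ico 0 π, Hfun ν θ ∂volume)
      ≤ ENNReal.ofReal (2*π) * ∫⁻ z : ℂ × ℂ, edist z.1 z.2 ^ (-(1:ℝ)) ∂(ν.prod ν) := by
  set I : ℝ≥0∞ := ∫⁻ z : ℂ × ℂ, edist z.1 z.2 ^ (-(1:ℝ)) ∂(ν.prod ν) with hIdef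
  have h2 : (∫⁻ θ in Set.Ico 0 π, Hfun ν θ ∂volume)
      ≤ liminf (fun n => ∫⁻ θ in Set.Ico 0 π,
          Ffun ν (dseq n) θ / ENNReal.ofReal (2 * dseq n) ∂volume) atTop := by
    refine le_trans (lintegral_mono (hFatou1 ν)) ?_
    exact lintegral_liminf_le fun n => (Ffun_meas ν (dseq n)).div measurable_const
  apply h2.trans
  have h3 : ∀ n : ℕ, (∫⁻ θ in Set.Ico 0 π,
      Ffun ν (dseq n) θ / ENNReal.ofReal (2 * dseq n) ∂volume)
        ≤ ENNReal.ofReal (2*π) * I := by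
    intro n
    have hc0 : ENNReal.ofReal (2 * dseq n) ≠ 0 :=
      ne_of_gt (ENNReal.ofReal_pos.mpr (by linarith [dseq_pos n]))
    have hct : ENNReal.ofReal (2 * dseq n) ≠ ⊤ := ENNReal.ofReal_ne_top
    simp_rw [div_eq_mul_inv]
    rw [lintegral_mul_const _ (Ffun_meas ν (dseq n))]
    calc (∫⁻ θ in Set.Ico 0 π, Ffun ν (dseq n) θ ∂volume) * (ENNReal.ofReal (2 * dseq n))⁻¹
        ≤ (ENNReal.ofReal (2 * dseq n) * (ENNReal.ofReal (2*π) * I))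
            * (ENNReal.ofReal (2 * dseq n))⁻¹ :=
          mul_le_mul_left (hdouble ν (dseq_pos n)) _
      _ = ENNReal.ofReal (2*π) * I := by
          rw [mul_comm (ENNReal.ofReal (2 * dseq n)), mul_assoc,
            ENNReal.mul_inv_cancel hc0 hct, mul_one]
  refine le_trans (Filter.liminf_le_liminf (Eventually.of_forall h3)) ?_
  rw [liminf_const]

/-- Marstrand's projection theorem in the plane, `L²` form: if a compactly supported
finite measure `ν₁` on `ℂ ≃ ℝ²` has finite `1`-energy, then for a.e. direction
`θ ∈ [0,π)` the orthogonal projection of `ν₁` onto the line `ℝ·e^{i(θ+π/2)}` is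
absolutely continuous, and the densities are square-integrable in `(θ, ξ)` with
`L²`-norm squared bounded by a universal constant times the `1`-energy. -/
theorem marstrand_projection_L2 :
    ∃ C : ℝ≥0∞, 0 < C ∧ C < ⊤ ∧
      ∀ ν₁ : Measure ℂ, IsFiniteMeasure ν₁ →
        (∃ K : Set ℂ, IsCompact K ∧ ν₁ Kᶜ = 0) →
        (∫⁻ x, ∫⁻ y, (edist x y) ^ (-(1:ℝ)) ∂ν₁ ∂ν₁) < ⊤ →
        (∀ᵐ θ ∂(volume.restrict (Set.Ico (0:ℝ) π)),
          Measure.map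
            (fun z : ℂ =>
              (z * (starRingEnd ℂ) (Complex.exp (((θ + π/2 : ℝ) : ℂ) * Complex.I))).re)
            ν₁ ≪ volume) ∧
        (∫⁻ θ in Set.Ico (0:ℝ) π, ∫⁻ ξ : ℝ,
            ((Measure.map
              (fun z : ℂ =>
                (z * (starRingEnd ℂ) (Complex.exp (((θ + π/2 : ℝ) : ℂ) * Complex.I))).re)
              ν₁).rnDeriv volume ξ) ^ 2 ∂volume ∂volume)
          ≤ C * ∫⁻ x, ∫⁻ y, (edist x y) ^ (-(1:ℝ)) ∂ν₁ ∂ν₁ := by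
  refine ⟨ENNReal.ofReal (2*π), ENNReal.ofReal_pos.mpr (by positivity),
    ENNReal.ofReal_lt_top, ?_⟩
  intro ν hfin _hK hI
  have hedm : Measurable fun z : ℂ × ℂ => edist z.1 z.2 ^ (-(1:ℝ)) := by
    simp_rw [ENNReal.rpow_neg_one]
    exact measurable_edist.inv
  have hIprod : (∫⁻ z : ℂ × ℂ, edist z.1 z.2 ^ (-(1:ℝ)) ∂(ν.prod ν))
      = ∫⁻ x, ∫⁻ y, (edist x y) ^ (-(1:ℝ)) ∂ν ∂ν := lintegral_prod _ hedm.aemeasurable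
  have hIlt : (∫⁻ z : ℂ × ℂ, edist z.1 z.2 ^ (-(1:ℝ)) ∂(ν.prod ν)) < ⊤ := hIprod ▸ hI
  have hHfin : ∀ᵐ θ ∂(volume.restrict (Set.Ico (0:ℝ) π)), Hfun ν θ < ⊤ := by
    apply ae_lt_top (Hfun_meas ν)
    exact ne_top_of_le_ne_top (ENNReal.mul_lt_top ENNReal.ofReal_lt_top hIlt).ne (hmain ν)
  haveI hμfin : ∀ θ : ℝ, IsFiniteMeasure (Measure.map (mproj θ) ν) :=
    fun θ => Measure.isFiniteMeasure_map ν _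
  have part1 : ∀ᵐ θ ∂(volume.restrict (Set.Ico (0:ℝ) π)),
      Measure.map (mproj θ) ν ≪ volume := by
    filter_upwards [hHfin] with θ hθ
    apply absCont
    have hfin2 : (∫⁻ ξ, Lfun (Measure.map (mproj θ) ν) ξ ∂(Measure.map (mproj θ) ν)) < ⊤ := by
      rw [Hfun_eq ν θ]; exact hθ
    exact ae_lt_top (measurable_Lfun _) hfin2.ne
  have part2 : (∫⁻ θ in Set.Ico (0:ℝ) π, ∫⁻ ξ : ℝ,
      ((Measure.map (mproj θ) ν).rnDeriv volume ξ) ^ 2 ∂volume ∂volume)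
      ≤ ENNReal.ofReal (2*π) * ∫⁻ z : ℂ × ℂ, edist z.1 z.2 ^ (-(1:ℝ)) ∂(ν.prod ν) := by
    refine le_trans (lintegral_mono_ae ?_) (hmain ν)
    filter_upwards [part1] with θ hac
    set f := (Measure.map (mproj θ) ν).rnDeriv volume with hfdef
    have hf : Measurable f := Measure.measurable_rnDeriv _ _
    have hwd : volume.withDensity f = Measure.map (mproj θ) ν :=
      Measure.withDensity_rnDeriv_eq _ _ hac
    have h1 : (∫⁻ ξ, f ξ ^ 2 ∂volume) = ∫⁻ ξ, f ξ ∂(Measure.map (mproj θ) ν) := by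
      rw [← hwd, lintegral_withDensity_eq_lintegral_mul _ hf hf]
      apply lintegral_congr
      intro ξ
      simp [pow_two]
    have h2 : (∫⁻ ξ, f ξ ∂(Measure.map (mproj θ) ν))
        = ∫⁻ ξ, Lfun (Measure.map (mproj θ) ν) ξ ∂(Measure.map (mproj θ) ν) :=
      lintegral_congr_ae ((Lfun_eq_rnDeriv _ hac).mono fun ξ h => h.symm)
    rw [h1, h2, Hfun_eq ν θ]
  exact ⟨part1, le_trans part2 (le_of_eq (by rw [hIprod]))⟩
end
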